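/- Suppose that R is a ring, S ∈ Den_l(R, 0) and 𝔭 is a prime ideal of R. (1) If S⁻¹𝔭 ∩ R = 𝔭, then S⁻¹𝔭 is a prime ideal of S⁻¹R if and only if the left ideal S⁻¹𝔭 of S⁻¹R is a two-sided ideal. (2) If S⁻¹𝔭 ∩ R is a prime ideal of R, then S⁻¹𝔭 is a prime ideal of S⁻¹R if and only if the left ideal S⁻¹𝔭 of S⁻¹R is a two-sided ideal. -/
import Mathlib


/- Common framework: two-sided ideals, prime ideals, denominator sets and
   left localizations of (possibly noncommutative) rings, described
   axiomatically via their characteristic properties. -/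

namespace BavulaMinPrimes

/-- A subset of a ring is a two-sided ideal. -/
def IsIdealSet {R : Type*} [Ring R] (I : Set R) : Prop :=
  (0 : R) ∈ I ∧ (∀ a ∈ I, ∀ b ∈ I, a + b ∈ I) ∧ (∀ a ∈ I, -a ∈ I) ∧
    ∀ a ∈ I, ∀ r : R, r * a ∈ I ∧ a * r ∈ I

/-- A (two-sided) prime ideal: a proper ideal `P` such that `A * B ⊆ P`
implies `A ⊆ P` or `B ⊆ P` for all ideals `A`, `B`. -/
def IsPrimeIdealSet {R : Type*} [Ring R] (P : Set R) : Prop :=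
  IsIdealSet P ∧ P ≠ Set.univ ∧
    ∀ A B : Set R, IsIdealSet A → IsIdealSet B →
      (∀ a ∈ A, ∀ b ∈ B, a * b ∈ P) → A ⊆ P ∨ B ⊆ P

/-- A completely prime ideal: the factor ring is a domain. -/
def IsCompletelyPrimeIdealSet {R : Type*} [Ring R] (P : Set R) : Prop :=
  IsIdealSet P ∧ P ≠ Set.univ ∧ ∀ a b : R, a * b ∈ P → a ∈ P ∨ b ∈ P

/-- A minimal prime ideal of a ring. -/
def IsMinimalPrimeIdealSet {R : Type*} [Ring R] (P : Set R) : Prop :=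
  IsPrimeIdealSet P ∧ ∀ P' : Set R, IsPrimeIdealSet P' → P' ⊆ P → P' = P

/-- A prime minimal over an ideal `A`. -/
def IsMinimalPrimeOver {R : Type*} [Ring R] (A P : Set R) : Prop :=
  IsPrimeIdealSet P ∧ A ⊆ P ∧
    ∀ P' : Set R, IsPrimeIdealSet P' → A ⊆ P' → P' ⊆ P → P' = P

/-- The set `min(R)` of minimal primes of `R`. -/
def minPrimes (R : Type*) [Ring R] : Set (Set R) := { P | IsMinimalPrimeIdealSet P }

/-- The prime radical: intersection of all prime ideals. -/
def primeRadicalSet (R : Type*) [Ring R] : Set R :=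
  { r : R | ∀ P : Set R, IsPrimeIdealSet P → r ∈ P }

/-- A ring is semiprime if its prime radical is zero. -/
def IsSemiprimeRing (R : Type*) [Ring R] : Prop := primeRadicalSet R = {0}

/-- A ring is prime if its zero ideal is a prime ideal. -/
def IsPrimeRing (R : Type*) [Ring R] : Prop := IsPrimeIdealSet ({0} : Set R)

/-- A multiplicative subset: `1 ∈ S`, `0 ∉ S`, closed under multiplication. -/
def IsMulSet {R : Type*} [Ring R] (S : Set R) : Prop :=
  (1 : R) ∈ S ∧ (0 : R) ∉ S ∧ ∀ s ∈ S, ∀ t ∈ S, s * t ∈ S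

/-- The left Ore condition: `S r ∩ R s ≠ ∅`. -/
def LeftOre {R : Type*} [Ring R] (S : Set R) : Prop :=
  ∀ r : R, ∀ s ∈ S, ∃ s' ∈ S, ∃ r' : R, s' * r = r' * s

/-- The right Ore condition: `r S ∩ s R ≠ ∅`. -/
def RightOre {R : Type*} [Ring R] (S : Set R) : Prop :=
  ∀ r : R, ∀ s ∈ S, ∃ s' ∈ S, ∃ r' : R, r * s' = s * r'

/-- A left denominator set: a left Ore multiplicative set such that
`r s = 0` (with `s ∈ S`) implies `t r = 0` for some `t ∈ S`. -/
def IsLeftDenominatorSet {R : Type*} [Ring R] (S : Set R) : Prop :=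
  IsMulSet S ∧ LeftOre S ∧ ∀ r : R, ∀ s ∈ S, r * s = 0 → ∃ t ∈ S, t * r = 0

/-- A right denominator set. -/
def IsRightDenominatorSet {R : Type*} [Ring R] (S : Set R) : Prop :=
  IsMulSet S ∧ RightOre S ∧ ∀ r : R, ∀ s ∈ S, s * r = 0 → ∃ t ∈ S, r * t = 0

/-- `ass_l(S) = { r | s r = 0 for some s ∈ S }`. -/
def lAss {R : Type*} [Ring R] (S : Set R) : Set R := { r : R | ∃ s ∈ S, s * r = 0 }

/-- `f : R →+* Q` realizes `Q` as the left localization `S⁻¹R`: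
elements of `S` become units, every element of `Q` is a left fraction
`(f s)⁻¹ (f r)`, and the kernel of `f` is `ass_l(S)`.  These properties
characterize `S⁻¹R` up to a unique `R`-isomorphism. -/
structure IsLeftLocalization {R Q : Type*} [Ring R] [Ring Q]
    (S : Set R) (f : R →+* Q) : Prop where
  isUnit : ∀ s ∈ S, IsUnit (f s)
  surj : ∀ q : Q, ∃ s ∈ S, ∃ r : R, f s * q = f r
  ker : ∀ r : R, f r = 0 ↔ r ∈ lAss S

/-- `S⁻¹I = { s⁻¹ a | s ∈ S, a ∈ I }` as a subset of the localization `Q`: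
`q ∈ S⁻¹I` iff `f s * q = f a` for some `s ∈ S`, `a ∈ I`. -/
def locSet {R Q : Type*} [Ring R] [Ring Q] (f : R →+* Q) (S : Set R)
    (I : Set R) : Set Q :=
  { q : Q | ∃ s ∈ S, ∃ a ∈ I, f s * q = f a }

/-- A normal element: `R n = n R`. -/
def IsNormalElement {R : Type*} [Ring R] (n : R) : Prop :=
  (∀ r : R, ∃ r' : R, r * n = n * r') ∧ ∀ r : R, ∃ r' : R, n * r = r' * n

/-- A prime rich ring: every ideal contains a finite product of prime ideals
containing it (the empty product being the whole ring). -/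
def IsPrimeRich (R : Type*) [Ring R] : Prop :=
  ∀ A : Set R, IsIdealSet A →
    ∃ (n : ℕ) (P : Fin n → Set R),
      (∀ i, IsPrimeIdealSet (P i) ∧ A ⊆ P i) ∧
      ∀ x : Fin n → R, (∀ i, x i ∈ P i) → (List.ofFn x).prod ∈ A

/-- An ideal which is finitely generated as a right `R`-module. -/
def IsFGRightIdeal {R : Type*} [Ring R] (I : Set R) : Prop :=
  ∃ (m : ℕ) (g : Fin m → R), (∀ i, g i ∈ I) ∧
    ∀ x ∈ I, ∃ c : Fin m → R, x = ∑ i, g i * c i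

theorem preimage_idealSet {R Q : Type*} [Ring R] [Ring Q] (f : R →+* Q) {A : Set Q}
    (hA : IsIdealSet A) : IsIdealSet (f ⁻¹' A) := by
  obtain ⟨h0, hadd, hneg, hmul⟩ := hA
  refine ⟨by simp [Set.mem_preimage, h0], ?_, ?_, ?_⟩
  · intro a ha b hb
    simp only [Set.mem_preimage, map_add]
    exact hadd _ ha _ hb
  · intro a ha
    simp only [Set.mem_preimage, map_neg]
    exact hneg _ ha
  · intro a ha r
    constructor <;> simp only [Set.mem_preimage, map_mul]
    · exact (hmul _ ha _).1
    · exact (hmul _ ha _).2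

theorem aux_prime {R Q : Type*} [Ring R] [Ring Q]
    {S : Set R} (hS : IsLeftDenominatorSet S)
    (f : R →+* Q) (hf : IsLeftLocalization S f) {p : Set R}
    (hP : IsPrimeIdealSet (f ⁻¹' locSet f S p))
    (hI : IsIdealSet (locSet f S p)) : IsPrimeIdealSet (locSet f S p) := by
  obtain ⟨hPI, hne, hprime⟩ := hP
  refine ⟨hI, ?_, ?_⟩
  · intro h
    exact hne (by rw [h, Set.preimage_univ])
  · intro A B hA hB hAB
    have key : ∀ C : Set Q, IsIdealSet C → f ⁻¹' C ⊆ f ⁻¹' (locSet f S p) →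
        C ⊆ locSet f S p := by
      intro C hC hsub q hq
      obtain ⟨s, hs, r, hr⟩ := hf.surj q
      have h1 : f r ∈ C := hr ▸ (hC.2.2.2 q hq (f s)).1
      have h2 : r ∈ f ⁻¹' (locSet f S p) := hsub h1
      obtain ⟨t, ht, a, ha, hta⟩ := h2
      exact ⟨t * s, hS.1.2.2 t ht s hs, a, ha, by rw [map_mul, mul_assoc, hr, hta]⟩
    rcases hprime (f ⁻¹' A) (f ⁻¹' B) (preimage_idealSet f hA) (preimage_idealSet f hB)
      (fun a ha b hb => by
        show f (a * b) ∈ locSet f S p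
        rw [map_mul]
        exact hAB _ ha _ hb) with h | h
    · exact Or.inl (key A hA h)
    · exact Or.inr (key B hB h)

/-- Let `S ∈ Den_l(R, 0)` and `𝔭` a prime ideal of `R`.
(1) If `S⁻¹𝔭 ∩ R = 𝔭`, then `S⁻¹𝔭` is a prime ideal of `S⁻¹R` iff the left
ideal `S⁻¹𝔭` is a two-sided ideal.  (2) If `S⁻¹𝔭 ∩ R` is a prime ideal of
`R`, then `S⁻¹𝔭` is a prime ideal of `S⁻¹R` iff the left ideal `S⁻¹𝔭` is a
two-sided ideal. -/
theorem statement15 {R Q : Type*} [Ring R] [Ring Q]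
    {S : Set R} (hS : IsLeftDenominatorSet S) (hass : lAss S = ({0} : Set R))
    (f : R →+* Q) (hf : IsLeftLocalization S f)
    {p : Set R} (hp : IsPrimeIdealSet p) :
    (f ⁻¹' locSet f S p = p →
      (IsPrimeIdealSet (locSet f S p) ↔ IsIdealSet (locSet f S p))) ∧
    (IsPrimeIdealSet (f ⁻¹' locSet f S p) →
      (IsPrimeIdealSet (locSet f S p) ↔ IsIdealSet (locSet f S p))) := by
  constructor
  · intro h
    exact ⟨fun hpr => hpr.1, fun hI => aux_prime hS f hf (by rw [h]; exact hp) hI⟩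
  · intro h
    exact ⟨fun hpr => hpr.1, fun hI => aux_prime hS f hf h hI⟩

end BavulaMinPrimes
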